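/- arXiv:1602.05045 — 3 statements merged into one kernel-verified Lean document; each statement's English description precedes it below -/
import Mathlib

section
/- Every finite word x(0) x(1) ... x(L-1) over the alphabet {0, 1, ..., m-1} of length L ≥ 2^m contains a bad j-pair for some j, i.e., there exist indices i < i' < L and a letter j such that x(i) = x(i') = j and x(i'') < j for all i'' with i < i'' < i'. -/
private lemma aux_bad_pair : ∀ (m a L : ℕ) (x : ℕ → ℕ),
    (∀ i, a ≤ i → i < a + L → x i < m) → 2 ^ m ≤ L →
    ∃ j i i', a ≤ i ∧ i < i' ∧ i' < a + L ∧ x i = j ∧ x i' = j ∧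
      ∀ i'', i < i'' → i'' < i' → x i'' < j := by
  intro m
  induction m with
  | zero =>
    intro a L x hb hL
    exact absurd (hb a le_rfl (by omega)) (by omega)
  | succ k ih =>
    intro a L x hb hL
    have hL1 : 1 ≤ L := le_trans Nat.one_le_two_pow hL
    have hne : (Finset.Ico a (a + L)).Nonempty := by
      rw [Finset.nonempty_Ico]; omega
    obtain ⟨p, hp, hpx⟩ := Finset.exists_mem_eq_sup' hne x
    set M := (Finset.Ico a (a + L)).sup' hne x with hM
    rw [Finset.mem_Ico] at hp
    have hMle : ∀ i, a ≤ i → i < a + L → x i ≤ M := fun i h1 h2 =>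
      Finset.le_sup' x (Finset.mem_Ico.mpr ⟨h1, h2⟩)
    have hMk : M ≤ k := by
      have := hb p hp.1 hp.2; omega
    by_cases htwo : ∃ q, a ≤ q ∧ q < a + L ∧ q ≠ p ∧ x q = M
    · obtain ⟨q, hq1, hq2, hq3, hq4⟩ := htwo
      set i := min p q with hi
      have hchoice := min_choice p q
      have hi1 : a ≤ i := le_min hp.1 hq1
      have hxi : x i = M := by
        rcases hchoice with h | h <;> rw [hi, h] <;> [exact hpx.symm; exact hq4]
      have hex : ∃ r, i < r ∧ r < a + L ∧ x r = M := by
        rcases lt_or_gt_of_ne hq3 with h | h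
        · exact ⟨p, by omega, hp.2, hpx.symm⟩
        · exact ⟨q, by omega, hq2, hq4⟩
      classical
      set i' := Nat.find hex with hi'
      obtain ⟨h1', h2', h3'⟩ := Nat.find_spec hex
      refine ⟨M, i, i', hi1, h1', h2', hxi, h3', fun i'' ha hb' => ?_⟩
      have hle := hMle i'' (by omega) (by omega)
      rcases eq_or_lt_of_le hle with h | h
      · have hfle : i' ≤ i'' := Nat.find_le (⟨ha, by omega, h⟩ : i < i'' ∧ i'' < a + L ∧ x i'' = M)
        omega
      · exact h
    · push_neg at htwo
      by_cases hleft : 2 ^ k ≤ p - a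
      · obtain ⟨j, i, i', h1, h2, h3, h4, h5, h6⟩ :=
          ih a (p - a) x (fun i hi1 hi2 => by
            have hip : i < p := by omega
            have hle := hMle i hi1 (by omega)
            have hne' : x i ≠ M := fun h => by
              have := htwo i hi1 (by omega) (by omega)
              exact this h
            omega) hleft
        exact ⟨j, i, i', h1, h2, by omega, h4, h5, h6⟩
      · have hright : 2 ^ k ≤ a + L - p - 1 := by
          have : 2 ^ (k + 1) = 2 * 2 ^ k := by ring
          omega
        obtain ⟨j, i, i', h1, h2, h3, h4, h5, h6⟩ :=
          ih (p + 1) (a + L - p - 1) x (fun i hi1 hi2 => by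
            have hle := hMle i (by omega) (by omega)
            have hne' : x i ≠ M := fun h => by
              have := htwo i (by omega) (by omega) (by omega)
              exact this h
            omega) hright
        exact ⟨j, i, i', by omega, h2, by omega, h4, h5, h6⟩

theorem every_long_word_has_bad_pair (m L : ℕ) (x : ℕ → Fin m) (hL : 2 ^ m ≤ L) :
    ∃ (j : Fin m) (i i' : ℕ), i < i' ∧ i' < L ∧ x i = j ∧ x i' = j ∧
      ∀ i'', i < i'' → i'' < i' → x i'' < j := by
  obtain ⟨j, i, i', h1, h2, h3, h4, h5, h6⟩ :=
    aux_bad_pair m 0 L (fun i => (x i).val) (fun i _ _ => (x i).isLt) hL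
  refine ⟨x i, i, i', h2, by omega, rfl, Fin.ext (by rw [h5, ← h4]), fun i'' ha hb => ?_⟩
  have := h6 i'' ha hb
  exact Fin.lt_def.mpr (by omega)
end

section
/- For every n ≥ 0 and every j, the word w_n (defined by w_0 = 0 and w_j = w_{j-1} · j · w_{j-1}) contains no bad j-pair, i.e., there are no positions i < i' with w_n(i) = w_n(i') = j and w_n(i'') < j for all i < i'' < i'. -/
def badWord : ℕ → List ℕ
  | 0 => [0]
  | j + 1 => badWord j ++ [j + 1] ++ badWord j

lemma badWord_mem_le (n : ℕ) : ∀ x ∈ badWord n, x ≤ n := by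
  induction n with
  | zero => simp [badWord]
  | succ n ih =>
    intro x hx
    simp only [badWord, List.mem_append, List.mem_singleton] at hx
    rcases hx with (hx | hx) | hx
    · exact (ih x hx).trans (Nat.le_succ n)
    · omega
    · exact (ih x hx).trans (Nat.le_succ n)

lemma badWord_getD_le (n i : ℕ) (h : i < (badWord n).length) :
    (badWord n).getD i 0 ≤ n := by
  rw [List.getD_eq_getElem _ _ h]
  exact badWord_mem_le n _ (List.getElem_mem h)

lemma badWord_key (n : ℕ) : ∀ j i i', i < i' → i' < (badWord n).length →
    (badWord n).getD i 0 = j → (badWord n).getD i' 0 = j →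
    ∃ k, i < k ∧ k < i' ∧ j ≤ (badWord n).getD k 0 := by
  induction n with
  | zero =>
    intro j i i' h1 h2 _ _
    simp [badWord] at h2
    omega
  | succ n ih =>
    intro j i i' h1 h2 hi hi'
    have hlen : (badWord (n+1)).length = (badWord n).length + 1 + (badWord n).length := by
      simp only [badWord, List.length_append, List.length_singleton]
    have hword : badWord (n+1) = (badWord n ++ [n+1]) ++ badWord n := by
      simp [badWord]
    have hL1 : (badWord n ++ [n+1]).length = (badWord n).length + 1 := by simp
    have eleft : ∀ m, m < (badWord n).length →
        (badWord (n+1)).getD m 0 = (badWord n).getD m 0 := by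
      intro m hm
      rw [hword, List.getD_append _ _ _ _ (by omega),
        List.getD_append _ _ _ _ hm]
    have emid : (badWord (n+1)).getD (badWord n).length 0 = n + 1 := by
      rw [hword, List.getD_append _ _ _ _ (by omega),
        List.getD_append_right _ _ _ _ (le_refl _)]
      simp
    have eright : ∀ m, (badWord n).length < m →
        (badWord (n+1)).getD m 0 = (badWord n).getD (m - ((badWord n).length + 1)) 0 := by
      intro m hm
      rw [hword, List.getD_append_right _ _ _ _ (by omega), hL1]
    rcases lt_trichotomy i' (badWord n).length with hc | hc | hc
    · obtain ⟨k, hk1, hk2, hk3⟩ := ih j i i' h1 hc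
        (by rw [← eleft i (by omega)]; exact hi)
        (by rw [← eleft i' hc]; exact hi')
      exact ⟨k, hk1, hk2, by rw [eleft k (by omega)]; exact hk3⟩
    · have h3 := emid
      rw [hc] at hi'
      have := badWord_getD_le n i (by omega)
      rw [← eleft i (by omega)] at this
      omega
    · rcases lt_trichotomy i (badWord n).length with hd | hd | hd
      · have hj : j ≤ n := by
          have := badWord_getD_le n i hd
          rw [← eleft i hd] at this
          omega
        exact ⟨(badWord n).length, hd, hc, by omega⟩
      · rw [hd] at hi
        rw [emid] at hi
        have := badWord_getD_le n (i' - ((badWord n).length + 1)) (by omega)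
        rw [← eright i' hc] at this
        omega
      · obtain ⟨k, hk1, hk2, hk3⟩ := ih j (i - ((badWord n).length + 1))
          (i' - ((badWord n).length + 1)) (by omega) (by omega)
          (by rw [← eright i hd]; exact hi)
          (by rw [← eright i' hc]; exact hi')
        refine ⟨k + (badWord n).length + 1, by omega, by omega, ?_⟩
        rw [eright (k + (badWord n).length + 1) (by omega)]
        have : k + (badWord n).length + 1 - ((badWord n).length + 1) = k := by omega
        rw [this]; exact hk3

theorem badWord_no_bad_pair (n j : ℕ) :
    ¬ ∃ i i', i < i' ∧ i' < (badWord n).length ∧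
      (badWord n).getD i 0 = j ∧ (badWord n).getD i' 0 = j ∧
      ∀ i'', i < i'' → i'' < i' → (badWord n).getD i'' 0 < j := by
  rintro ⟨i, i', h1, h2, hi, hi', hall⟩
  obtain ⟨k, hk1, hk2, hk3⟩ := badWord_key n j i i' h1 h2 hi hi'
  exact absurd (hall k hk1 hk2) (by omega)
end

section
/- Let c : ℕ → Bool be k-spaced (infinitely many change points and every block has length at least k) and let i be any position. If there exists a position i' with i ≤ i' ≤ i + k such that some property P holds at i', then there exists a position i'' ≥ i with P holding at i'' such that at most one change point lies in the interval (i, i''] (i.e., P holds 'within at most one color change' from i). -/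
def ChangePoint (c : ℕ → Bool) (i : ℕ) : Prop := i = 0 ∨ c (i - 1) ≠ c i

/-- Every maximal constant block of `c` has length at most `k`: after any
position there is a change point within the next `k` positions. -/
def KBounded (c : ℕ → Bool) (k : ℕ) : Prop :=
  ∀ i, ∃ j, i < j ∧ j ≤ i + k ∧ ChangePoint c j

/-- `c` has infinitely many change points and every block has length at least `k`. -/
def KSpaced (c : ℕ → Bool) (k : ℕ) : Prop :=
  (∀ N, ∃ j, N ≤ j ∧ ChangePoint c j) ∧
  ∀ j j', j < j' → ChangePoint c j → ChangePoint c j' →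
    (∀ l, j < l → l < j' → ¬ ChangePoint c l) → k ≤ j' - j

theorem spaced_within_one_change (c : ℕ → Bool) (k : ℕ) (hk : 1 ≤ k)
    (hs : KSpaced c k) (P : ℕ → Prop) (i : ℕ)
    (hP : ∃ i', i ≤ i' ∧ i' ≤ i + k ∧ P i') :
    ∃ i'', i ≤ i'' ∧ P i'' ∧
      ∀ j j', i < j → j ≤ i'' → ChangePoint c j →
        i < j' → j' ≤ i'' → ChangePoint c j' → j = j' := by
  classical
  obtain ⟨i', hii', hik, hPi'⟩ := hP
  have gap : ∀ a b : ℕ, a < b → ChangePoint c a → ChangePoint c b → k ≤ b - a := by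
    intro a b hab ha hb
    have hne : ∃ l, a < l ∧ ChangePoint c l := ⟨b, hab, hb⟩
    have hm := Nat.find_spec hne
    have hmle : Nat.find hne ≤ b := Nat.find_min' hne ⟨hab, hb⟩
    have hgap : k ≤ Nat.find hne - a :=
      hs.2 a (Nat.find hne) hm.1 ha hm.2 (fun l hl1 hl2 hcl =>
        Nat.find_min hne hl2 ⟨hl1, hcl⟩)
    omega
  refine ⟨i', hii', hPi', ?_⟩
  intro j j' hij hji hcj hij' hji' hcj'
  rcases lt_trichotomy j j' with h | h | h
  · have := gap j j' h hcj hcj'; omega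
  · exact h
  · have := gap j' j h hcj' hcj; omega
end
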